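/- Let n ≥ 3 be an integer and define, for R > 0, Q(R) = (sinh R)^{n−1} · ∫₀^π (sin θ)^{n−2} · (cosh R − sinh R · cos θ)^{−2(n−1)} dθ. Then there exist real numbers α_{−(n−1)}, α_{−(n−2)}, …, α_{n−2}, α_{n−1} such that Q(R) = Σ_{j=−(n−1)}^{n−1} α_j · e^{2jR} for all R > 0. -/

import Mathlib

open MeasureTheory Real Filter

noncomputable section

/-- `Q R` is (up to a positive dimensional constant) the integral of the square of the
hyperbolic Poisson kernel `P₋₁` over the geodesic sphere of radius `R` in `n`-dimensional
real hyperbolic space of curvature `-1`. -/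
def Q (n : ℕ) (R : ℝ) : ℝ :=
  Real.sinh R ^ (n - 1) *
    ∫ θ in (0:ℝ)..π,
      Real.sin θ ^ (n - 2) * (Real.cosh R - Real.sinh R * Real.cos θ) ^ (-(2 * ((n : ℤ) - 1)))

open Set
lemma D_pos (R θ : ℝ) : 0 < Real.cosh R - Real.sinh R * Real.cos θ := by
  have h2 : |Real.sinh R| < Real.cosh R := by
    nlinarith [Real.cosh_sq R, Real.cosh_pos R, sq_abs (Real.sinh R), abs_nonneg (Real.sinh R)]
  have h3 : Real.sinh R * Real.cos θ ≤ |Real.sinh R| := by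
    calc Real.sinh R * Real.cos θ ≤ |Real.sinh R * Real.cos θ| := le_abs_self _
      _ = |Real.sinh R| * |Real.cos θ| := abs_mul _ _
      _ ≤ |Real.sinh R| * 1 :=
          mul_le_mul_of_nonneg_left (Real.abs_cos_le_one θ) (abs_nonneg _)
      _ = |Real.sinh R| := mul_one _
  linarith

lemma subst_step (m : ℕ) (R : ℝ) :
    (∫ θ in (0:ℝ)..π, Real.sin θ ^ (m+1) *
        (Real.cosh R - Real.sinh R * Real.cos θ) ^ (-(2 * (m : ℤ) + 4))) =
      ∫ θ in (0:ℝ)..π, Real.sin θ ^ (m+1) *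
        (Real.cosh R + Real.sinh R * Real.cos θ) ^ (m+2) := by
  set c := Real.cosh R with hc
  set s := Real.sinh R with hs
  have hcs : c ^ 2 - s ^ 2 = 1 := Real.cosh_sq_sub_sinh_sq R
  have hD : ∀ θ : ℝ, 0 < c - s * Real.cos θ := D_pos R
  have hDne : ∀ θ : ℝ, c - s * Real.cos θ ≠ 0 := fun θ => (hD θ).ne'
  have hcps : 0 < c + s := by rw [hc, hs, Real.cosh_add_sinh]; exact Real.exp_pos R
  have hcms : 0 < c - s := by rw [hc, hs, Real.cosh_sub_sinh]; exact Real.exp_pos (-R)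
  set g : ℝ → ℝ := fun θ => (c * Real.cos θ - s) / (c - s * Real.cos θ) with hgdef
  have hg_le : ∀ θ, g θ ≤ 1 := by
    intro θ
    rw [hgdef, div_le_one (hD θ)]
    nlinarith [Real.cos_le_one θ]
  have hg_ge : ∀ θ, -1 ≤ g θ := by
    intro θ
    rw [hgdef, le_div_iff₀ (hD θ)]
    nlinarith [Real.neg_one_le_cos θ]
  have hg_sq : ∀ θ, 1 - g θ ^ 2 = Real.sin θ ^ 2 / (c - s * Real.cos θ) ^ 2 := by
    intro θ
    have hpy : Real.sin θ ^ 2 + Real.cos θ ^ 2 = 1 := Real.sin_sq_add_cos_sq θ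
    have hnum : (c - s * Real.cos θ) ^ 2 - (c * Real.cos θ - s) ^ 2 = Real.sin θ ^ 2 := by
      linear_combination (1 - Real.cos θ ^ 2) * hcs - hpy
    rw [hgdef]
    rw [div_pow, one_sub_div (pow_ne_zero 2 (hDne θ)), hnum]
  have hgcont : Continuous g :=
    Continuous.div ((continuous_const.mul Real.continuous_cos).sub continuous_const)
      (continuous_const.sub (continuous_const.mul Real.continuous_cos)) hDne
  have hgd : ∀ θ : ℝ, HasDerivAt g (-Real.sin θ / (c - s * Real.cos θ) ^ 2) θ := by
    intro θ
    have hu : HasDerivAt (fun θ : ℝ => c * Real.cos θ - s) (c * -Real.sin θ) θ :=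
      ((Real.hasDerivAt_cos θ).const_mul c).sub_const s
    have hv : HasDerivAt (fun θ : ℝ => c - s * Real.cos θ) (-(s * -Real.sin θ)) θ :=
      ((Real.hasDerivAt_cos θ).const_mul s).const_sub c
    have hdiv := hu.div hv (hDne θ)
    refine hdiv.congr_deriv ?_
    rw [div_left_inj' (pow_ne_zero 2 (hDne θ))]
    linear_combination -Real.sin θ * hcs
  have hsqrt : ∀ θ ∈ Icc (0:ℝ) π, Real.sqrt (1 - g θ ^ 2) = Real.sin θ / (c - s * Real.cos θ) := by
    intro θ hθ
    rw [hg_sq θ, ← div_pow, Real.sqrt_sq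
      (div_nonneg (Real.sin_nonneg_of_nonneg_of_le_pi hθ.1 hθ.2) (hD θ).le)]
  have hφd : ∀ θ ∈ Ioo (0:ℝ) π, HasDerivAt (fun θ => Real.arccos (g θ))
      ((c - s * Real.cos θ)⁻¹) θ := by
    intro θ hθ
    have hsθ : 0 < Real.sin θ := Real.sin_pos_of_pos_of_lt_pi hθ.1 hθ.2
    have h1g : 0 < 1 - g θ ^ 2 := by
      rw [hg_sq θ]; exact div_pos (pow_pos hsθ 2) (pow_pos (hD θ) 2)
    have h₁ : g θ ≠ -1 := by intro h; rw [h] at h1g; norm_num at h1g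
    have h₂ : g θ ≠ 1 := by intro h; rw [h] at h1g; norm_num at h1g
    have harc := (Real.hasDerivAt_arccos h₁ h₂).comp θ (hgd θ)
    refine harc.congr_deriv ?_
    rw [hsqrt θ (Ioo_subset_Icc_self hθ)]
    field_simp [hsθ.ne', hDne θ]
  have hg0 : g 0 = 1 := by
    rw [hgdef]; simp only [Real.cos_zero, mul_one]; rw [div_self hcms.ne']
  have hgπ : g π = -1 := by
    rw [hgdef]; simp only [Real.cos_pi, mul_neg_one, mul_neg]
    rw [sub_neg_eq_add, div_eq_iff (by linarith)]; ring
  have hφ0 : Real.arccos (g 0) = 0 := by rw [hg0, Real.arccos_one]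
  have hφπ : Real.arccos (g π) = π := by rw [hgπ, Real.arccos_neg_one]
  have key := intervalIntegral.integral_comp_smul_deriv''
    (a := (0:ℝ)) (b := π)
    (f := fun θ => Real.arccos (g θ)) (f' := fun θ => (c - s * Real.cos θ)⁻¹)
    (g := fun y => Real.sin y ^ (m+1) * (c + s * Real.cos y) ^ (m+2))
    ((Real.continuous_arccos.comp hgcont).continuousOn)
    (by
      intro x hx
      rw [min_eq_left Real.pi_pos.le, max_eq_right Real.pi_pos.le] at hx
      exact (hφd x hx).hasDerivWithinAt)
    ((Continuous.inv₀ (continuous_const.sub (continuous_const.mul Real.continuous_cos))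
        hDne).continuousOn)
    (((Real.continuous_sin.pow (m+1)).mul
      ((continuous_const.add (continuous_const.mul Real.continuous_cos)).pow (m+2))).continuousOn)
  simp only [hg0, hgπ, Real.arccos_one, Real.arccos_neg_one, smul_eq_mul,
    Function.comp] at key
  rw [← key]
  apply intervalIntegral.integral_congr
  intro θ hθ
  rw [Set.uIcc_of_le Real.pi_pos.le] at hθ
  have hsθ : 0 ≤ Real.sin θ := Real.sin_nonneg_of_nonneg_of_le_pi hθ.1 hθ.2
  simp only [smul_eq_mul, Function.comp]
  rw [Real.sin_arccos, Real.cos_arccos (hg_ge θ) (hg_le θ), hsqrt θ hθ]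
  have hcsg : c + s * g θ = (c - s * Real.cos θ)⁻¹ := by
    have h := hDne θ
    simp only [hgdef]
    rw [inv_eq_one_div, eq_div_iff h, add_mul, mul_assoc, div_mul_cancel₀ _ h]
    linear_combination hcs
  rw [hcsg]
  have hz : (c - s * Real.cos θ) ^ (-(2 * (m:ℤ) + 4)) =
      ((c - s * Real.cos θ) ^ (2*m+4 : ℕ))⁻¹ := by
    rw [← zpow_natCast, ← zpow_neg]
    norm_num
  rw [hz, div_pow, inv_pow]
  field_simp
  ring

/-- The constant `∫₀^π sin^(m+1) cos^i`. -/
def J (m i : ℕ) : ℝ := ∫ θ in (0:ℝ)..π, Real.sin θ ^ (m+1) * Real.cos θ ^ i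

lemma expand_step (m : ℕ) (R : ℝ) :
    (∫ θ in (0:ℝ)..π, Real.sin θ ^ (m+1) * (Real.cosh R + Real.sinh R * Real.cos θ) ^ (m+2)) =
    ∑ k ∈ Finset.range (m+3), (Nat.choose (m+2) k : ℝ) * Real.cosh R ^ k *
      Real.sinh R ^ (m+2-k) * J m (m+2-k) := by
  have h1 : ∀ θ : ℝ, Real.sin θ ^ (m+1) * (Real.cosh R + Real.sinh R * Real.cos θ) ^ (m+2)
      = ∑ k ∈ Finset.range (m+3), (Nat.choose (m+2) k : ℝ) * Real.cosh R ^ k *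
          Real.sinh R ^ (m+2-k) * (Real.sin θ ^ (m+1) * Real.cos θ ^ (m+2-k)) := by
    intro θ
    rw [add_pow, Finset.mul_sum]
    apply Finset.sum_congr rfl
    intro k _
    rw [mul_pow]
    ring
  simp_rw [h1]
  rw [intervalIntegral.integral_finset_sum]
  · apply Finset.sum_congr rfl
    intro k _
    rw [intervalIntegral.integral_const_mul]
    rfl
  · intro k _
    apply Continuous.intervalIntegrable
    exact continuous_const.mul ((Real.continuous_sin.pow (m+1)).mul (Real.continuous_cos.pow _))

/-- For `n ≥ 3`, the spherical L²-integral of the hyperbolic Poisson kernel has the closed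
form `Q(R) = Σ_{j=-(n-1)}^{n-1} α_j e^(2jR)` for some real coefficients `α_j`. -/
theorem poisson_kernel_sphere_integral_closed_form (n : ℕ) (hn : 3 ≤ n) :
    ∃ α : ℤ → ℝ, ∀ R : ℝ, 0 < R →
      Q n R = ∑ j ∈ Finset.Icc (-((n : ℤ) - 1)) ((n : ℤ) - 1), α j * Real.exp (2 * j * R) := by
  obtain ⟨m, rfl⟩ : ∃ m, n = m + 3 := ⟨n - 3, by omega⟩
  set P : Polynomial ℝ := ∑ k ∈ Finset.range (m+3),
    Polynomial.C ((Nat.choose (m+2) k : ℝ) * J m (m+2-k) / 4 ^ (m+2)) *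
      (Polynomial.X + 1) ^ k * (Polynomial.X - 1) ^ (2*m+4-k) with hP
  have hdeg : P.natDegree < 2*m+5 := by
    apply Nat.lt_succ_of_le
    apply Polynomial.natDegree_sum_le_of_forall_le
    intro k hk
    have hA : (Polynomial.X + 1 : Polynomial ℝ).natDegree = 1 := by
      simpa using Polynomial.natDegree_X_add_C (1:ℝ)
    have hB : (Polynomial.X - 1 : Polynomial ℝ).natDegree = 1 := by
      simpa using Polynomial.natDegree_X_sub_C (1:ℝ)
    have hk' : k ≤ m + 2 := by
      simp only [Finset.mem_range] at hk; omega
    calc (Polynomial.C ((Nat.choose (m+2) k : ℝ) * J m (m+2-k) / 4 ^ (m+2)) *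
          (Polynomial.X + 1) ^ k * (Polynomial.X - 1) ^ (2*m+4-k)).natDegree
        ≤ (Polynomial.C ((Nat.choose (m+2) k : ℝ) * J m (m+2-k) / 4 ^ (m+2)) *
          (Polynomial.X + 1 : Polynomial ℝ) ^ k).natDegree +
            ((Polynomial.X - 1 : Polynomial ℝ) ^ (2*m+4-k)).natDegree :=
          Polynomial.natDegree_mul_le
      _ ≤ ((Polynomial.C ((Nat.choose (m+2) k : ℝ) * J m (m+2-k) / 4 ^ (m+2))).natDegree +
          ((Polynomial.X + 1 : Polynomial ℝ) ^ k).natDegree) +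
            ((Polynomial.X - 1 : Polynomial ℝ) ^ (2*m+4-k)).natDegree :=
          Nat.add_le_add_right Polynomial.natDegree_mul_le _
      _ ≤ (0 + k * 1) + (2*m+4-k) * 1 := by
          gcongr
          · exact le_of_eq (Polynomial.natDegree_C _)
          · exact Polynomial.natDegree_pow_le.trans (by rw [hA])
          · exact Polynomial.natDegree_pow_le.trans (by rw [hB])
      _ ≤ 2*m+4 := by omega
  refine ⟨fun j => P.coeff (j + (m+2)).toNat, ?_⟩
  intro R hR
  have hE : (0:ℝ) < Real.exp R := Real.exp_pos R
  set x := Real.exp (2*R) with hxdef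
  have hx : (0:ℝ) < x := Real.exp_pos _
  have hx2 : x = Real.exp R ^ 2 := by
    rw [hxdef, show (2:ℝ)*R = ((2:ℕ):ℝ)*R by norm_num, Real.exp_nat_mul]
  have hcosh : Real.cosh R = (x + 1) / (2 * Real.exp R) := by
    rw [Real.cosh_eq, Real.exp_neg, hx2]
    field_simp
  have hsinh : Real.sinh R = (x - 1) / (2 * Real.exp R) := by
    rw [Real.sinh_eq, Real.exp_neg, hx2]
    field_simp
  have hQ1 : Q (m+3) R = Real.sinh R ^ (m+2) * ∑ k ∈ Finset.range (m+3),
      (Nat.choose (m+2) k : ℝ) * Real.cosh R ^ k * Real.sinh R ^ (m+2-k) * J m (m+2-k) := by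
    have e1 : -(2 * (((m+3:ℕ) : ℤ) - 1)) = -(2 * (m:ℤ) + 4) := by push_cast; ring
    unfold Q
    rw [show (m+3-1) = m+2 from rfl, show (m+3-2) = m+1 from rfl, e1,
      subst_step m R, expand_step m R]
  have hQ2 : Q (m+3) R = ∑ k ∈ Finset.range (m+3),
      (Nat.choose (m+2) k : ℝ) * J m (m+2-k) * (Real.cosh R ^ k * Real.sinh R ^ (2*m+4-k)) := by
    rw [hQ1, Finset.mul_sum]
    apply Finset.sum_congr rfl
    intro k hk
    have hk' : k ≤ m + 2 := by simp only [Finset.mem_range] at hk; omega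
    have hss : Real.sinh R ^ (m+2) * Real.sinh R ^ (m+2-k) = Real.sinh R ^ (2*m+4-k) := by
      rw [← pow_add]; congr 1; omega
    rw [← hss]; ring
  have hpow : (2 * Real.exp R) ^ (2*m+4) = 4 ^ (m+2) * x ^ (m+2) := by
    rw [hx2, mul_pow, show (4:ℝ) = 2^2 by norm_num, ← pow_mul, ← pow_mul,
      show 2*(m+2) = 2*m+4 by ring]
  have hterm : ∀ k ∈ Finset.range (m+3), Real.cosh R ^ k * Real.sinh R ^ (2*m+4-k)
      = (x+1)^k * (x-1)^(2*m+4-k) / (4^(m+2) * x^(m+2)) := by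
    intro k hk
    have hk' : k ≤ m + 2 := by simp only [Finset.mem_range] at hk; omega
    rw [hcosh, hsinh, div_pow, div_pow, div_mul_div_comm, ← pow_add,
      show k + (2*m+4-k) = 2*m+4 by omega, hpow]
  have hPeval : Polynomial.eval x P = ∑ k ∈ Finset.range (m+3),
      (Nat.choose (m+2) k : ℝ) * J m (m+2-k) / 4^(m+2) * ((x+1)^k * (x-1)^(2*m+4-k)) := by
    rw [hP]
    simp only [Polynomial.eval_finset_sum, Polynomial.eval_mul, Polynomial.eval_pow,
      Polynomial.eval_add, Polynomial.eval_sub, Polynomial.eval_X, Polynomial.eval_one,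
      Polynomial.eval_C]
    apply Finset.sum_congr rfl
    intro k _
    ring
  have hQ3 : Q (m+3) R = Polynomial.eval x P / x ^ (m+2) := by
    rw [hQ2, hPeval, Finset.sum_div]
    apply Finset.sum_congr rfl
    intro k hk
    rw [hterm k hk]
    field_simp
  have heval' : Polynomial.eval x P = ∑ i ∈ Finset.range (2*m+5), P.coeff i * x ^ i :=
    Polynomial.eval_eq_sum_range' hdeg x
  have hIccEq : (((m+3:ℕ) : ℤ) - 1) = (m:ℤ) + 2 := by push_cast; ring
  rw [hIccEq]
  have hmap : Finset.Icc (-((m:ℤ)+2)) ((m:ℤ)+2) =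
      Finset.map ⟨fun i : ℕ => (i:ℤ) - (m+2), by intro a b h; simp only at h; omega⟩
        (Finset.range (2*m+5)) := by
    ext j
    simp only [Finset.mem_Icc, Finset.mem_map, Finset.mem_range, Function.Embedding.coeFn_mk]
    dsimp only [DFunLike.coe]
    constructor
    · intro h
      exact ⟨(j + (m+2)).toNat, by omega, by omega⟩
    · rintro ⟨i, hi, rfl⟩
      omega
  rw [hmap, Finset.sum_map]
  simp only [Function.Embedding.coeFn_mk]
  dsimp only [DFunLike.coe]
  have hexp : ∀ i : ℕ, Real.exp (2 * (((i:ℤ) - (m+2) : ℤ) : ℝ) * R) = x ^ i / x ^ (m+2) := by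
    intro i
    rw [hxdef, ← Real.exp_nat_mul, ← Real.exp_nat_mul, ← Real.exp_sub]
    congr 1
    push_cast
    ring
  have htoNat : ∀ i : ℕ, (((i:ℤ) - (m+2)) + (m+2)).toNat = i := by intro i; omega
  rw [hQ3, heval', Finset.sum_div]
  apply Finset.sum_congr rfl
  intro i hi
  rw [htoNat i, hexp i]
  ring
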